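/- Let τ ∈ (0, 1/2], λ ∈ [τ, 1-τ], and a, b > 0. Then (1-λ)a + λb - a^(1-λ) b^λ ≥ τ (√a - √b)². -/
import Mathlib


/-- Stability of the weighted AM–GM inequality. -/
theorem amgm_stability (τ l a b : ℝ) (hτ : τ ∈ Set.Ioc (0:ℝ) (1/2))
    (hl : l ∈ Set.Icc τ (1 - τ)) (ha : 0 < a) (hb : 0 < b) :
    τ * (Real.sqrt a - Real.sqrt b) ^ 2 ≤ (1 - l) * a + l * b - a ^ (1 - l) * b ^ l := by
  obtain ⟨hτ0, hτ2⟩ := hτ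
  obtain ⟨hl1, hl2⟩ := hl
  have hab : (0:ℝ) < a * b := mul_pos ha hb
  have key := Real.geom_mean_le_arith_mean3_weighted
    (by linarith : (0:ℝ) ≤ 1 - l - τ) (by linarith : (0:ℝ) ≤ l - τ)
    (by linarith : (0:ℝ) ≤ 2 * τ) ha.le hb.le (Real.sqrt_nonneg (a*b))
    (by ring)
  have hsq : Real.sqrt (a*b) ^ (2*τ) = a ^ τ * b ^ τ := by
    rw [Real.sqrt_eq_rpow, ← Real.rpow_mul hab.le,
      show (1/2:ℝ)*(2*τ) = τ by ring, Real.mul_rpow ha.le hb.le]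
  have hprod : a ^ (1 - l - τ) * b ^ (l - τ) * (a ^ τ * b ^ τ) = a ^ (1-l) * b ^ l := by
    rw [show a ^ (1 - l - τ) * b ^ (l - τ) * (a ^ τ * b ^ τ)
        = (a ^ (1 - l - τ) * a ^ τ) * (b ^ (l - τ) * b ^ τ) by ring,
      ← Real.rpow_add ha, ← Real.rpow_add hb]
    ring_nf
  rw [hsq, hprod] at key
  have hexp : τ * (Real.sqrt a - Real.sqrt b) ^ 2 = τ*a + τ*b - 2*τ*Real.sqrt (a*b) := by
    rw [Real.sqrt_mul ha.le]
    rw [sub_sq, Real.sq_sqrt ha.le, Real.sq_sqrt hb.le]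
    ring
  rw [hexp]
  linarith
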